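/- Let m > 0 be a real number and let h : ℝ → ℝ be a differentiable function satisfying h′(t) = h(t)²/m for every t ∈ ℝ. Then h is identically zero. -/

import Mathlib

/-- Auxiliary: a global solution of `h' = h²/m` cannot be positive anywhere. -/
lemma riccati_aux (m : ℝ) (hm : 0 < m)
    (h : ℝ → ℝ) (hdiff : Differentiable ℝ h)
    (hode : ∀ t : ℝ, deriv h t = h t ^ 2 / m)
    (t₀ : ℝ) (ha : 0 < h t₀) : False := by
  have mono : Monotone h := by
    apply monotone_of_deriv_nonneg hdiff
    intro t
    rw [hode]
    positivity
  have hpos : ∀ t, t₀ ≤ t → 0 < h t := fun t ht => lt_of_lt_of_le ha (mono ht)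
  set T := t₀ + m / h t₀ with hT
  have hdiv : 0 < m / h t₀ := div_pos hm ha
  have hab : t₀ < T := by rw [hT]; linarith
  set φ : ℝ → ℝ := fun t => -(m / h t) with hφ
  have hder : ∀ t, t₀ ≤ t → HasDerivAt φ 1 t := by
    intro t ht
    have hne : h t ≠ 0 := (hpos t ht).ne'
    have H : HasDerivAt h (h t ^ 2 / m) t := hode t ▸ (hdiff t).hasDerivAt
    have := ((hasDerivAt_const t m).div H hne).neg
    refine this.congr_deriv ?_
    field_simp
    ring
  have hcont : ContinuousOn φ (Set.Icc t₀ T) :=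
    (continuousOn_const.div hdiff.continuous.continuousOn
      (fun t ht => (hpos t ht.1).ne')).neg
  obtain ⟨c, hc, heq⟩ := exists_hasDerivAt_eq_slope φ (fun _ => 1) hab hcont
    (fun x hx => hder x hx.1.le)
  have hTne : T - t₀ ≠ 0 := by linarith
  have h1 : φ T - φ t₀ = T - t₀ := by
    field_simp at heq
    linarith
  have hTpos : 0 < m / h T := div_pos hm (hpos T hab.le)
  have hφT : φ T = -(m / h T) := rfl
  have hφt₀ : φ t₀ = -(m / h t₀) := rfl
  rw [hφT, hφt₀, hT] at h1
  linarith

/-- For `m > 0`, the only globally defined differentiable solution of `h′ = h²/m` on all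
of `ℝ` is the zero function. -/
theorem global_riccati_solution_of_zero_lambda_is_zero
    (m : ℝ) (hm : 0 < m)
    (h : ℝ → ℝ) (hdiff : Differentiable ℝ h)
    (hode : ∀ t : ℝ, deriv h t = h t ^ 2 / m) :
    ∀ t : ℝ, h t = 0 := by
  intro t
  by_contra hne
  rcases lt_or_gt_of_ne hne with hlt | hgt
  · -- h t < 0 : apply the aux lemma to g s = -h (-s)
    set g : ℝ → ℝ := fun s => -h (-s) with hg
    have hgdiff : Differentiable ℝ g := (hdiff.comp differentiable_neg).neg
    have hgderiv : ∀ s, HasDerivAt g (deriv h (-s)) s := by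
      intro s
      have := ((hdiff (-s)).hasDerivAt.comp s (hasDerivAt_neg s)).neg
      refine this.congr_deriv ?_
      ring
    have hgode : ∀ s, deriv g s = g s ^ 2 / m := by
      intro s
      rw [(hgderiv s).deriv, hode]
      simp [hg]
    exact riccati_aux m hm g hgdiff hgode (-t) (by simp [hg]; linarith)
  · exact riccati_aux m hm h hdiff hode t hgt
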